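/- arXiv:0912.2123 — 2 statements merged into one kernel-verified Lean document; each statement's English description precedes it below -/
import Mathlib

section
/- (Kolmogorov's conditional-entropy formula agrees with Sinai's definition) Let (X, μ) be a probability space, T : X → X a measure-preserving map, and f : X → F a measurable map into a finite set F. For n ≥ 1 set a_n = H(ξ_T^{n+1}) − H(ξ_T^n). Then a_n equals the conditional Shannon entropy H[f | (f∘T, f∘T², …, f∘T^n)], the sequence (a_n) is nonincreasing, and a_n converges to h(T, f) = lim_{n→∞} H(ξ_T^n)/n. -/
open MeasureTheory Filter Set

/-- Shannon entropy of a finite measurable partition, encoded as a map `f : X → F`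
into a finite set, with respect to the measure `μ` (convention `0 log 0 = 0`). -/
noncomputable def shannonEntropy {X : Type*} [MeasurableSpace X] (μ : Measure X)
    {F : Type*} [Fintype F] (f : X → F) : ℝ :=
  -∑ a : F, (μ (f ⁻¹' {a})).toReal * Real.log (μ (f ⁻¹' {a})).toReal

/-- `H(ξ_T^n)`: the Shannon entropy of the joint partition
`x ↦ (f x, f (T x), …, f (T^[n-1] x))`. -/
noncomputable def jointH {X : Type*} [MeasurableSpace X] (μ : Measure X)
    (T : X → X) {F : Type*} [Fintype F] (f : X → F) (n : ℕ) : ℝ :=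
  shannonEntropy μ (fun x => (fun i : Fin n => f (T^[(i : ℕ)] x)))

/-- Conditional Shannon entropy `H[f | g]` of `f` given `g`: the average over the
cells of `g` of the entropy of `f` with respect to the normalized restriction of `μ`. -/
noncomputable def condShannonEntropy {X : Type*} [MeasurableSpace X] (μ : Measure X)
    {F G : Type*} [Fintype F] [Fintype G] (f : X → F) (g : X → G) : ℝ :=
  ∑ b : G, (μ (g ⁻¹' {b})).toReal *
    shannonEntropy ((μ (g ⁻¹' {b}))⁻¹ • μ.restrict (g ⁻¹' {b})) f

/-! ### Auxiliary real-analysis lemmas -/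

lemma KCE.mul_negMulLog_div {p q : ℝ} (hp : 0 ≤ p) (hpq : p ≤ q) :
    q * Real.negMulLog (p / q) = Real.negMulLog p + p * Real.log q := by
  rcases eq_or_lt_of_le hp with h0 | h0
  · simp [← h0]
  rcases eq_or_lt_of_le (h0.le.trans hpq) with hq | hq
  · simp [← hq, (le_antisymm (hq ▸ hpq) hp : p = 0)]
  unfold Real.negMulLog
  rw [Real.log_div h0.ne' hq.ne']
  field_simp
  ring

lemma KCE.neg_mul_log_le {p q : ℝ} (hp : 0 ≤ p) (hpq : p ≤ q) :
    -(p * Real.log q) ≤ Real.negMulLog p := by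
  rcases eq_or_lt_of_le hp with h0 | h0
  · simp [← h0]
  unfold Real.negMulLog
  rw [neg_mul]
  exact neg_le_neg (mul_le_mul_of_nonneg_left (Real.log_le_log h0 hpq) hp)

/-- The log-sum inequality, in `negMulLog` form. -/
lemma KCE.sum_negMulLog_add_le {ι : Type*} (t : Finset ι) (p q : ι → ℝ)
    (hp : ∀ b ∈ t, 0 ≤ p b) (hpq : ∀ b ∈ t, p b ≤ q b) :
    ∑ b ∈ t, (Real.negMulLog (p b) + p b * Real.log (q b)) ≤
      Real.negMulLog (∑ b ∈ t, p b) + (∑ b ∈ t, p b) * Real.log (∑ b ∈ t, q b) := by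
  have hq0 : ∀ b ∈ t, 0 ≤ q b := fun b hb => (hp b hb).trans (hpq b hb)
  have hP : 0 ≤ ∑ b ∈ t, p b := Finset.sum_nonneg hp
  have hQ : 0 ≤ ∑ b ∈ t, q b := Finset.sum_nonneg hq0
  have hPQ : (∑ b ∈ t, p b) ≤ ∑ b ∈ t, q b := Finset.sum_le_sum hpq
  rw [← KCE.mul_negMulLog_div hP hPQ]
  have hL : ∀ b ∈ t, Real.negMulLog (p b) + p b * Real.log (q b)
      = q b * Real.negMulLog (p b / q b) :=
    fun b hb => (KCE.mul_negMulLog_div (hp b hb) (hpq b hb)).symm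
  rw [Finset.sum_congr rfl hL]
  rcases eq_or_lt_of_le hQ with hQ0 | hQ0
  · have hqz : ∀ b ∈ t, q b = 0 := by
      intro b hb
      exact le_antisymm (((Finset.sum_eq_zero_iff_of_nonneg hq0).1 hQ0.symm) b hb).le (hq0 b hb)
    have h1 : ∀ b ∈ t, q b * Real.negMulLog (p b / q b) = 0 := by
      intro b hb; rw [hqz b hb]; ring
    have h2 : (∑ b ∈ t, q b) * Real.negMulLog ((∑ b ∈ t, p b) / ∑ b ∈ t, q b) = 0 := by
      rw [← hQ0]; ring
    rw [Finset.sum_congr rfl h1, h2, Finset.sum_const, smul_zero]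
  set Q := ∑ b ∈ t, q b with hQdef
  have key := Real.concaveOn_negMulLog.le_map_sum (t := t) (w := fun b => q b / Q)
      (p := fun b => p b / q b)
      (fun b hb => div_nonneg (hq0 b hb) hQ)
      (by rw [← Finset.sum_div, div_self hQ0.ne'])
      (fun b hb => div_nonneg (hp b hb) (hq0 b hb))
  have hsum : ∑ b ∈ t, (q b / Q) • (p b / q b) = (∑ b ∈ t, p b) / Q := by
    have he : ∀ b ∈ t, (q b / Q) • (p b / q b) = p b / Q := by
      intro b hb
      rcases eq_or_lt_of_le (hq0 b hb) with hqb | hqb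
      · have : p b = 0 := le_antisymm (hqb ▸ hpq b hb) (hp b hb)
        simp [this, ← hqb]
      · rw [smul_eq_mul]; field_simp
    rw [Finset.sum_congr rfl he, ← Finset.sum_div]
  rw [hsum] at key
  calc ∑ b ∈ t, q b * Real.negMulLog (p b / q b)
      = Q * ∑ b ∈ t, (q b / Q) • Real.negMulLog (p b / q b) := by
        rw [Finset.mul_sum]
        refine Finset.sum_congr rfl fun b hb => ?_
        rw [smul_eq_mul]; field_simp
    _ ≤ Q * Real.negMulLog ((∑ b ∈ t, p b) / Q) := mul_le_mul_of_nonneg_left key hQ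

/-! ### Entropy lemmas -/

section Lemmas
variable {X : Type*} [MeasurableSpace X] (μ : Measure X) [IsProbabilityMeasure μ]
  {F : Type*} [Fintype F] [MeasurableSpace F] [MeasurableSingletonClass F]
  {G : Type*} [Fintype G] {G' : Type*} [Fintype G']

omit [IsProbabilityMeasure μ] [MeasurableSpace F] [MeasurableSingletonClass F] in
lemma KCE.shannonEntropy_eq_sum (f : X → F) :
    shannonEntropy μ f = ∑ a : F, Real.negMulLog (μ (f ⁻¹' {a})).toReal := by
  rw [shannonEntropy, ← Finset.sum_neg_distrib]
  exact Finset.sum_congr rfl fun a _ => by rw [Real.negMulLog, neg_mul]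

lemma KCE.toReal_meas_eq_sum {f : X → F} (hf : Measurable f) (B : Set X) :
    (μ B).toReal = ∑ a : F, (μ (f ⁻¹' {a} ∩ B)).toReal := by
  have h1 : μ B = ∑ a : F, μ (f ⁻¹' {a} ∩ B) := by
    have hu : (Set.univ : Set X) = ⋃ a : F, f ⁻¹' {a} := by ext x; simp
    have hd : Pairwise (Function.onFun Disjoint fun a : F => f ⁻¹' {a}) := by
      intro a b hab
      refine Set.disjoint_left.2 fun x hx hx' => hab ?_
      simp only [Set.mem_preimage, Set.mem_singleton_iff] at hx hx'
      rw [← hx, ← hx']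
    calc μ B = μ.restrict B Set.univ := (Measure.restrict_apply_univ _).symm
      _ = ∑' a : F, μ.restrict B (f ⁻¹' {a}) := by
          rw [hu, measure_iUnion hd fun a => hf (measurableSet_singleton a)]
      _ = ∑ a : F, μ (f ⁻¹' {a} ∩ B) := by
          rw [tsum_fintype]
          exact Finset.sum_congr rfl fun a _ =>
            Measure.restrict_apply (hf (measurableSet_singleton a))
  rw [h1, ENNReal.toReal_sum fun a _ => measure_ne_top μ _]

/-- Chain rule : `H(f, g) = H(g) + H[f | g]`. -/
lemma KCE.shannonEntropy_pair_eq {f : X → F} (hf : Measurable f) (g : X → G) :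
    shannonEntropy μ (fun x => (f x, g x)) = shannonEntropy μ g + condShannonEntropy μ f g := by
  have hpre : ∀ (a : F) (b : G),
      (fun x => (f x, g x)) ⁻¹' {(a, b)} = f ⁻¹' {a} ∩ g ⁻¹' {b} := by
    intro a b; ext x; simp [Prod.ext_iff]
  rw [KCE.shannonEntropy_eq_sum, KCE.shannonEntropy_eq_sum, condShannonEntropy,
    Fintype.sum_prod_type_right, ← Finset.sum_add_distrib]
  refine Finset.sum_congr rfl fun b _ => ?_
  have hple : ∀ a : F, μ (f ⁻¹' {a} ∩ g ⁻¹' {b}) ≤ μ (g ⁻¹' {b}) :=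
    fun a => measure_mono Set.inter_subset_right
  rcases eq_or_ne (μ (g ⁻¹' {b})) 0 with hb | hb
  · have hz : ∀ a : F, μ ((fun x => (f x, g x)) ⁻¹' {(a, b)}) = 0 := by
      intro a; rw [hpre]; exact le_antisymm (hb ▸ hple a) zero_le
    simp [hz, hb]
  · have hq0 : 0 < (μ (g ⁻¹' {b})).toReal := ENNReal.toReal_pos hb (measure_ne_top μ _)
    have hnu : ∀ a : F,
        (((μ (g ⁻¹' {b}))⁻¹ • μ.restrict (g ⁻¹' {b})) (f ⁻¹' {a})).toReal
          = (μ (f ⁻¹' {a} ∩ g ⁻¹' {b})).toReal / (μ (g ⁻¹' {b})).toReal := by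
      intro a
      rw [Measure.smul_apply, smul_eq_mul,
        Measure.restrict_apply (hf (measurableSet_singleton a)),
        ENNReal.toReal_mul, ENNReal.toReal_inv, inv_mul_eq_div]
    rw [KCE.shannonEntropy_eq_sum]
    have hterm : ∀ a : F,
        Real.negMulLog ((((μ (g ⁻¹' {b}))⁻¹ • μ.restrict (g ⁻¹' {b})) (f ⁻¹' {a})).toReal)
          = (Real.negMulLog (μ (f ⁻¹' {a} ∩ g ⁻¹' {b})).toReal
            + (μ (f ⁻¹' {a} ∩ g ⁻¹' {b})).toReal * Real.log (μ (g ⁻¹' {b})).toReal)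
            / (μ (g ⁻¹' {b})).toReal := by
      intro a
      rw [hnu a, eq_div_iff hq0.ne', mul_comm]
      exact KCE.mul_negMulLog_div ENNReal.toReal_nonneg
        (ENNReal.toReal_mono (measure_ne_top μ _) (hple a))
    rw [Finset.sum_congr rfl fun a _ => hterm a, ← Finset.sum_div,
      Finset.sum_add_distrib, ← Finset.sum_mul, ← KCE.toReal_meas_eq_sum μ hf]
    rw [Finset.sum_congr rfl fun a (_ : a ∈ Finset.univ) => by rw [hpre a b]]
    field_simp
    rw [Real.negMulLog]
    ring

lemma KCE.shannonEntropy_le_pair {f : X → F} (hf : Measurable f) (g : X → G) :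
    shannonEntropy μ g ≤ shannonEntropy μ (fun x => (f x, g x)) := by
  rw [KCE.shannonEntropy_eq_sum, KCE.shannonEntropy_eq_sum, Fintype.sum_prod_type_right]
  refine Finset.sum_le_sum fun b _ => ?_
  have hpre : ∀ a : F, (fun x => (f x, g x)) ⁻¹' {(a, b)} = f ⁻¹' {a} ∩ g ⁻¹' {b} := by
    intro a; ext x; simp [Prod.ext_iff]
  have key : ∀ a : F,
      -((μ (f ⁻¹' {a} ∩ g ⁻¹' {b})).toReal * Real.log (μ (g ⁻¹' {b})).toReal)
        ≤ Real.negMulLog (μ ((fun x => (f x, g x)) ⁻¹' {(a, b)})).toReal := by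
    intro a
    rw [hpre a]
    exact KCE.neg_mul_log_le ENNReal.toReal_nonneg
      (ENNReal.toReal_mono (measure_ne_top μ _) (measure_mono Set.inter_subset_right))
  calc Real.negMulLog (μ (g ⁻¹' {b})).toReal
      = ∑ a : F, -((μ (f ⁻¹' {a} ∩ g ⁻¹' {b})).toReal * Real.log (μ (g ⁻¹' {b})).toReal) := by
        rw [Finset.sum_neg_distrib, ← Finset.sum_mul, ← KCE.toReal_meas_eq_sum μ hf,
          Real.negMulLog, neg_mul]
    _ ≤ ∑ a : F, Real.negMulLog (μ ((fun x => (f x, g x)) ⁻¹' {(a, b)})).toReal :=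
        Finset.sum_le_sum fun a _ => key a

/-- Refinement (submodularity) inequality : `H(f,g) + H(π∘g) ≤ H(f,π∘g) + H(g)`. -/
lemma KCE.shannonEntropy_refine {f : X → F} (hf : Measurable f) (g : X → G)
    (hg : ∀ b : G, MeasurableSet (g ⁻¹' {b})) (π : G → G') :
    shannonEntropy μ (fun x => (f x, g x)) + shannonEntropy μ (fun x => π (g x)) ≤
      shannonEntropy μ (fun x => (f x, π (g x))) + shannonEntropy μ g := by
  classical
  have hpre1 : ∀ (a : F) (b : G),
      (fun x => (f x, g x)) ⁻¹' {(a, b)} = f ⁻¹' {a} ∩ g ⁻¹' {b} := by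
    intro a b; ext x; simp [Prod.ext_iff]
  have hpre2 : ∀ (a : F) (c : G'),
      (fun x => (f x, π (g x))) ⁻¹' {(a, c)} = f ⁻¹' {a} ∩ (fun x => π (g x)) ⁻¹' {c} := by
    intro a c; ext x; simp [Prod.ext_iff]
  have hdisj : ∀ c : G', ((Finset.univ.filter fun b : G => π b = c) : Set G).PairwiseDisjoint
      (fun b => g ⁻¹' {b}) := by
    intro c b _ b' _ hbb'
    refine Set.disjoint_left.2 fun x hx hx' => hbb' ?_
    simp only [Set.mem_preimage, Set.mem_singleton_iff] at hx hx'
    rw [← hx, ← hx']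
  have hdisj2 : ∀ (a : F) (c : G'),
      ((Finset.univ.filter fun b : G => π b = c) : Set G).PairwiseDisjoint
      (fun b => f ⁻¹' {a} ∩ g ⁻¹' {b}) := by
    intro a c b hb b' hb' hbb'
    exact (hdisj c hb hb' hbb').mono Set.inter_subset_right Set.inter_subset_right
  have hUq : ∀ c : G', (fun x => π (g x)) ⁻¹' {c}
      = ⋃ b ∈ (Finset.univ.filter fun b : G => π b = c), g ⁻¹' {b} := by
    intro c; ext x
    simp only [Set.mem_preimage, Set.mem_singleton_iff, Set.mem_iUnion, Finset.mem_filter,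
      Finset.mem_univ, true_and]
    exact ⟨fun h => ⟨g x, h, rfl⟩, fun ⟨b, hb, hbx⟩ => hbx ▸ hb⟩
  have hQ : ∀ c : G', (μ ((fun x => π (g x)) ⁻¹' {c})).toReal
      = ∑ b ∈ Finset.univ.filter (fun b : G => π b = c), (μ (g ⁻¹' {b})).toReal := by
    intro c
    rw [hUq c, measure_biUnion_finset (hdisj c) fun b _ => hg b,
      ENNReal.toReal_sum fun b _ => measure_ne_top μ _]
  have hP : ∀ (a : F) (c : G'), (μ (f ⁻¹' {a} ∩ (fun x => π (g x)) ⁻¹' {c})).toReal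
      = ∑ b ∈ Finset.univ.filter (fun b : G => π b = c),
          (μ (f ⁻¹' {a} ∩ g ⁻¹' {b})).toReal := by
    intro a c
    rw [hUq c, Set.inter_iUnion₂,
      measure_biUnion_finset (hdisj2 a c)
        (fun b _ => (hf (measurableSet_singleton a)).inter (hg b)),
      ENNReal.toReal_sum fun b _ => measure_ne_top μ _]
  -- abbreviations
  set pm : F → G → ℝ := fun a b => (μ (f ⁻¹' {a} ∩ g ⁻¹' {b})).toReal with hpm
  set qm : G → ℝ := fun b => (μ (g ⁻¹' {b})).toReal with hqm
  set Pm : F → G' → ℝ := fun a c => (μ (f ⁻¹' {a} ∩ (fun x => π (g x)) ⁻¹' {c})).toReal with hPm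
  set Qm : G' → ℝ := fun c => (μ ((fun x => π (g x)) ⁻¹' {c})).toReal with hQm
  have hqsum : ∀ b : G, qm b = ∑ a : F, pm a b := fun b => KCE.toReal_meas_eq_sum μ hf _
  have hQsum : ∀ c : G', Qm c = ∑ a : F, Pm a c := fun c => KCE.toReal_meas_eq_sum μ hf _
  have e1 : shannonEntropy μ (fun x => (f x, g x)) = ∑ b : G, ∑ a : F, Real.negMulLog (pm a b) := by
    rw [KCE.shannonEntropy_eq_sum, Fintype.sum_prod_type_right]
    exact Finset.sum_congr rfl fun b _ => Finset.sum_congr rfl fun a _ => by rw [hpre1 a b]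
  have e2 : shannonEntropy μ (fun x => (f x, π (g x)))
      = ∑ c : G', ∑ a : F, Real.negMulLog (Pm a c) := by
    rw [KCE.shannonEntropy_eq_sum, Fintype.sum_prod_type_right]
    exact Finset.sum_congr rfl fun c _ => Finset.sum_congr rfl fun a _ => by rw [hpre2 a c]
  have e3 : shannonEntropy μ (fun x => π (g x)) = ∑ c : G', Real.negMulLog (Qm c) :=
    KCE.shannonEntropy_eq_sum μ _
  have e4 : shannonEntropy μ g = ∑ b : G, Real.negMulLog (qm b) := KCE.shannonEntropy_eq_sum μ _
  rw [e1, e2, e3, e4]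
  rw [← Finset.sum_fiberwise Finset.univ π (fun b => ∑ a : F, Real.negMulLog (pm a b)),
    ← Finset.sum_fiberwise Finset.univ π (fun b => Real.negMulLog (qm b)),
    ← Finset.sum_add_distrib, ← Finset.sum_add_distrib]
  refine Finset.sum_le_sum fun c _ => ?_
  -- per-fiber inequality
  have key : ∑ a : F, ∑ b ∈ Finset.univ.filter (fun b : G => π b = c),
      (Real.negMulLog (pm a b) + pm a b * Real.log (qm b))
      ≤ ∑ a : F, (Real.negMulLog (Pm a c) + Pm a c * Real.log (Qm c)) := by
    refine Finset.sum_le_sum fun a _ => ?_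
    have := KCE.sum_negMulLog_add_le (Finset.univ.filter fun b : G => π b = c)
      (fun b => pm a b) qm (fun b _ => ENNReal.toReal_nonneg)
      (fun b _ => ENNReal.toReal_mono (measure_ne_top μ _)
        (measure_mono Set.inter_subset_right))
    rwa [← hP a c, ← hQ c] at this
  have hL : ∑ b ∈ Finset.univ.filter (fun b : G => π b = c),
      ∑ a : F, (Real.negMulLog (pm a b) + pm a b * Real.log (qm b))
      = (∑ b ∈ Finset.univ.filter (fun b : G => π b = c), ∑ a : F, Real.negMulLog (pm a b))
        - ∑ b ∈ Finset.univ.filter (fun b : G => π b = c), Real.negMulLog (qm b) := by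
    rw [← Finset.sum_sub_distrib]
    refine Finset.sum_congr rfl fun b _ => ?_
    rw [Finset.sum_add_distrib, ← Finset.sum_mul, ← hqsum b, Real.negMulLog]
    ring
  have hR : ∑ a : F, (Real.negMulLog (Pm a c) + Pm a c * Real.log (Qm c))
      = (∑ a : F, Real.negMulLog (Pm a c)) - Real.negMulLog (Qm c) := by
    rw [Finset.sum_add_distrib, ← Finset.sum_mul, ← hQsum c, Real.negMulLog]
    ring
  rw [Finset.sum_comm] at key
  rw [hL, hR] at key
  linarith

omit [IsProbabilityMeasure μ] [MeasurableSpace F] [MeasurableSingletonClass F] in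
lemma KCE.shannonEntropy_comp_injective {H : Type*} [Fintype H] (f : X → F) (e : F → H)
    (he : Function.Injective e) :
    shannonEntropy μ (fun x => e (f x)) = shannonEntropy μ f := by
  classical
  rw [KCE.shannonEntropy_eq_sum, KCE.shannonEntropy_eq_sum]
  rw [← Finset.sum_subset (Finset.subset_univ (Finset.univ.image e)) ?_]
  · rw [Finset.sum_image fun a _ a' _ h => he h]
    refine Finset.sum_congr rfl fun a _ => ?_
    have hpe : (fun x => e (f x)) ⁻¹' {e a} = f ⁻¹' {a} := by
      ext x; simp [he.eq_iff]
    rw [hpe]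
  · intro b _ hb
    have hpe : (fun x => e (f x)) ⁻¹' {b} = ∅ := by
      ext x
      simp only [Set.mem_preimage, Set.mem_singleton_iff, Set.mem_empty_iff_false, iff_false]
      intro h
      exact hb (Finset.mem_image.2 ⟨f x, Finset.mem_univ _, h⟩)
    simp [hpe]

omit [IsProbabilityMeasure μ] [MeasurableSpace F] [MeasurableSingletonClass F] in
lemma KCE.shannonEntropy_comp_mp {T : X → X} (hT : MeasurePreserving T μ μ) (ξ : X → F)
    (hξ : ∀ b, MeasurableSet (ξ ⁻¹' {b})) :
    shannonEntropy μ (fun x => ξ (T x)) = shannonEntropy μ ξ := by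
  rw [KCE.shannonEntropy_eq_sum, KCE.shannonEntropy_eq_sum]
  refine Finset.sum_congr rfl fun b _ => ?_
  have : μ ((fun x => ξ (T x)) ⁻¹' {b}) = μ (ξ ⁻¹' {b}) :=
    hT.measure_preimage (hξ b).nullMeasurableSet
  rw [this]

end Lemmas
section Main
variable {X : Type*} [MeasurableSpace X] (μ : Measure X) [IsProbabilityMeasure μ]
  (T : X → X) {F : Type*} [Fintype F] [MeasurableSpace F] [MeasurableSingletonClass F]

lemma KCE.measurable_joint (hT : Measurable T) {f : X → F} (hf : Measurable f)
    (n : ℕ) (k : ℕ) (b : Fin n → F) :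
    MeasurableSet ((fun x => (fun i : Fin n => f (T^[(i : ℕ) + k] x))) ⁻¹' {b}) := by
  have hpe : (fun x => (fun i : Fin n => f (T^[(i : ℕ) + k] x))) ⁻¹' {b}
      = ⋂ i : Fin n, (fun x => f (T^[(i : ℕ) + k] x)) ⁻¹' {b i} := by
    ext x
    simp only [Set.mem_preimage, Set.mem_singleton_iff, Set.mem_iInter, funext_iff]
  rw [hpe]
  exact MeasurableSet.iInter fun i =>
    (hf.comp (hT.iterate _)) (measurableSet_singleton _)

lemma KCE.jointH_succ (hT : MeasurePreserving T μ μ) {f : X → F} (hf : Measurable f) (n : ℕ) :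
    jointH μ T f (n + 1) =
      shannonEntropy μ (fun x => (f x, fun i : Fin n => f (T^[(i : ℕ) + 1] x))) := by
  have he : Function.Injective
      (fun p : F × (Fin n → F) => (Fin.cons p.1 p.2 : Fin (n + 1) → F)) := by
    intro p q h
    have h0 : p.1 = q.1 := by
      have := congrFun h 0
      simpa using this
    have h2 : p.2 = q.2 := by
      funext i
      have := congrFun h i.succ
      simpa using this
    exact Prod.ext h0 h2
  have hfun : (fun x => (fun p : F × (Fin n → F) => (Fin.cons p.1 p.2 : Fin (n + 1) → F))
      ((f x, fun i : Fin n => f (T^[(i : ℕ) + 1] x))))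
      = fun x => (fun i : Fin (n + 1) => f (T^[(i : ℕ)] x)) := by
    funext x
    funext i
    refine Fin.cases ?_ ?_ i
    · simp
    · intro j
      simp
  rw [jointH, ← KCE.shannonEntropy_comp_injective μ
    (fun x => (f x, fun i : Fin n => f (T^[(i : ℕ) + 1] x))) _ he, hfun]

lemma KCE.jointH_shift (hT : MeasurePreserving T μ μ) {f : X → F} (hf : Measurable f) (n : ℕ) :
    jointH μ T f n = shannonEntropy μ (fun x => (fun i : Fin n => f (T^[(i : ℕ) + 1] x))) := by
  have hfun : (fun x => (fun i : Fin n => f (T^[(i : ℕ) + 1] x)))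
      = fun x => (fun i : Fin n => f (T^[(i : ℕ)] (T x))) := by
    funext x
    funext i
    rw [Function.iterate_succ_apply]
  have hmeas : ∀ b, MeasurableSet ((fun x => (fun i : Fin n => f (T^[(i : ℕ)] x))) ⁻¹' {b}) := by
    intro b
    have := KCE.measurable_joint T hT.measurable hf n 0 b
    simpa using this
  rw [jointH, hfun]
  exact (KCE.shannonEntropy_comp_mp μ hT (fun x => (fun i : Fin n => f (T^[(i : ℕ)] x))) hmeas).symm

end Main
/-- Kolmogorov's conditional-entropy formula agrees with Sinai's
definition: for `n ≥ 1`, `a_n = H(ξ_T^{n+1}) − H(ξ_T^n)` equals the conditional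
entropy `H[f | (f∘T, …, f∘T^n)]`, the sequence `(a_n)` is nonincreasing, and `a_n`
converges to `h(T,f) = lim_n H(ξ_T^n)/n`. -/
theorem kolmogorov_conditional_entropy {X : Type*} [MeasurableSpace X] (μ : Measure X)
    [IsProbabilityMeasure μ] (T : X → X) (hT : MeasurePreserving T μ μ)
    {F : Type*} [Fintype F] [MeasurableSpace F] [MeasurableSingletonClass F]
    (f : X → F) (hf : Measurable f) :
    ∃ h : ℝ, Tendsto (fun n : ℕ => jointH μ T f n / (n : ℝ)) atTop (nhds h) ∧
      (∀ n : ℕ, 1 ≤ n →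
        jointH μ T f (n + 1) - jointH μ T f n =
          condShannonEntropy μ f (fun x => (fun i : Fin n => f (T^[(i : ℕ) + 1] x)))) ∧
      (∀ n : ℕ, 1 ≤ n →
        jointH μ T f (n + 2) - jointH μ T f (n + 1) ≤
          jointH μ T f (n + 1) - jointH μ T f n) ∧
      Tendsto (fun n : ℕ => jointH μ T f (n + 1) - jointH μ T f n) atTop (nhds h) := by
  classical
  set a : ℕ → ℝ := fun n => jointH μ T f (n + 1) - jointH μ T f n with ha
  have hC : ∀ n : ℕ, a n
      = condShannonEntropy μ f (fun x => (fun i : Fin n => f (T^[(i : ℕ) + 1] x))) := by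
    intro n
    show jointH μ T f (n + 1) - jointH μ T f n = _
    rw [KCE.jointH_succ μ T hT hf n, KCE.jointH_shift μ T hT hf n,
      KCE.shannonEntropy_pair_eq μ hf _]
    ring
  have hpos : ∀ n, 0 ≤ a n := by
    intro n
    have hle := KCE.shannonEntropy_le_pair μ hf
      (fun x => (fun i : Fin n => f (T^[(i : ℕ) + 1] x)))
    show 0 ≤ jointH μ T f (n + 1) - jointH μ T f n
    rw [KCE.jointH_succ μ T hT hf n, KCE.jointH_shift μ T hT hf n]
    linarith
  have hmono : ∀ n, a (n + 1) ≤ a n := by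
    intro n
    have hg : ∀ b : Fin (n + 1) → F,
        MeasurableSet ((fun x => (fun i : Fin (n + 1) => f (T^[(i : ℕ) + 1] x))) ⁻¹' {b}) :=
      fun b => KCE.measurable_joint T hT.measurable hf (n + 1) 1 b
    have key := KCE.shannonEntropy_refine μ hf
      (fun x => (fun i : Fin (n + 1) => f (T^[(i : ℕ) + 1] x))) hg
      (fun v : Fin (n + 1) → F => fun i : Fin n => v i.castSucc)
    simp only [Fin.coe_castSucc] at key
    show jointH μ T f (n + 1 + 1) - jointH μ T f (n + 1)
      ≤ jointH μ T f (n + 1) - jointH μ T f n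
    have e1 := KCE.jointH_succ μ T hT hf (n + 1)
    have e2 := KCE.jointH_shift μ T hT hf (n + 1)
    have e3 := KCE.jointH_succ μ T hT hf n
    have e4 := KCE.jointH_shift μ T hT hf n
    linarith [key, e1, e2, e3, e4]
  have h0 : jointH μ T f 0 = 0 := by
    rw [jointH, KCE.shannonEntropy_eq_sum]
    have hpe : ∀ b : Fin 0 → F,
        (fun x => (fun i : Fin 0 => f (T^[(i : ℕ)] x))) ⁻¹' {b} = Set.univ := by
      intro b; ext x
      simp only [Set.mem_preimage, Set.mem_singleton_iff, Set.mem_univ, iff_true]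
      funext i; exact i.elim0
    simp [hpe]
  have htel : ∀ n : ℕ, jointH μ T f n = ∑ i ∈ Finset.range n, a i := by
    intro n
    induction n with
    | zero => simpa using h0
    | succ m ih =>
        rw [Finset.sum_range_succ, ← ih]
        show _ = jointH μ T f m + (jointH μ T f (m + 1) - jointH μ T f m)
        ring
  have hanti : Antitone a := antitone_nat_of_succ_le hmono
  have hbdd : BddBelow (Set.range a) := ⟨0, by rintro y ⟨n, rfl⟩; exact hpos n⟩
  have hlim : Tendsto a atTop (nhds (⨅ n, a n)) := tendsto_atTop_ciInf hanti hbdd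
  refine ⟨⨅ n, a n, ?_, fun n _ => hC n, fun n _ => hmono n, hlim⟩
  refine hlim.cesaro.congr fun n => ?_
  rw [← htel n, div_eq_inv_mul]
end

section
/- (Rokhlin's countable generator theorem) Let (X, μ) be a nonatomic standard Borel probability space and T : X → X an invertible, aperiodic, measure-preserving transformation (aperiodic meaning μ{x : T^n x = x} = 0 for every n ≥ 1). Then there exists a measurable map f : X → ℕ which is a two-sided generator: for every measurable set A ⊆ X there exists a set B in the σ-algebra generated by the maps {f ∘ T^n : n ∈ ℤ} with μ(A Δ B) = 0. -/
open MeasureTheory Filter Set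

/-- The `n`-th power `T^n` (for `n : ℤ`) of an invertible transformation given as a
measurable equivalence `e : X ≃ᵐ X`. -/
def zIter {X : Type*} [MeasurableSpace X] (e : X ≃ᵐ X) (n : ℤ) : X → X :=
  if 0 ≤ n then (⇑e)^[n.toNat] else (⇑e.symm)^[(-n).toNat]

namespace RokhlinAux

variable {X : Type*} [MeasurableSpace X]

theorem zIter_neg_natCast (e : X ≃ᵐ X) (j : ℕ) :
    zIter e (-(j : ℤ)) = (⇑e.symm)^[j] := by
  unfold zIter
  cases j with
  | zero => norm_num
  | succ n =>
    have h1 : ¬ (0:ℤ) ≤ -((n+1 : ℕ) : ℤ) := by omega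
    have h2 : (-(-(((n+1:ℕ)):ℤ))).toNat = n+1 := by omega
    rw [if_neg h1, h2]

theorem iter_apply_symm (e : X ≃ᵐ X) (l i : ℕ) (x : X) :
    (⇑e)^[l] ((⇑e.symm)^[i] x) =
      if l ≤ i then (⇑e.symm)^[i - l] x else (⇑e)^[l - i] x := by
  have hli : Function.LeftInverse ⇑e ⇑e.symm := fun y => e.apply_symm_apply y
  split_ifs with h
  · conv_lhs => rw [show i = l + (i - l) by omega, Function.iterate_add_apply]
    rw [hli.iterate l]
  · conv_lhs => rw [show l = (l - i) + i by omega, Function.iterate_add_apply]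
    rw [hli.iterate i]

theorem symm_iter_apply (e : X ≃ᵐ X) (l i : ℕ) (x : X) :
    (⇑e.symm)^[l] ((⇑e)^[i] x) =
      if l ≤ i then (⇑e)^[i - l] x else (⇑e.symm)^[l - i] x := by
  simpa using iter_apply_symm e.symm l i x

/-- the full (two-sided) orbit saturation of a set -/
def orb (e : X ≃ᵐ X) (B : Set X) : Set X :=
  {x | ∃ n : ℕ, (⇑e)^[n] x ∈ B ∨ (⇑e.symm)^[n] x ∈ B}

theorem orb_mono (e : X ≃ᵐ X) {A B : Set X} (h : A ⊆ B) : orb e A ⊆ orb e B := by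
  rintro x ⟨n, hn | hn⟩
  exacts [⟨n, Or.inl (h hn)⟩, ⟨n, Or.inr (h hn)⟩]

theorem subset_orb (e : X ≃ᵐ X) (B : Set X) : B ⊆ orb e B := fun x hx => ⟨0, Or.inl hx⟩

theorem orb_trans (e : X ≃ᵐ X) {B : Set X} {x y : X} (hy : y ∈ orb e B)
    (h : ∃ n : ℕ, y = (⇑e)^[n] x ∨ y = (⇑e.symm)^[n] x) : x ∈ orb e B := by
  obtain ⟨m, hm⟩ := hy
  obtain ⟨n, rfl | rfl⟩ := h
  · rcases hm with hm | hm
    · rw [← Function.iterate_add_apply] at hm; exact ⟨m + n, Or.inl hm⟩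
    · rw [symm_iter_apply] at hm
      split_ifs at hm with h
      · exact ⟨n - m, Or.inl hm⟩
      · exact ⟨m - n, Or.inr hm⟩
  · rcases hm with hm | hm
    · rw [iter_apply_symm] at hm
      split_ifs at hm with h
      · exact ⟨n - m, Or.inr hm⟩
      · exact ⟨m - n, Or.inl hm⟩
    · rw [← Function.iterate_add_apply] at hm; exact ⟨m + n, Or.inr hm⟩

theorem orb_eq_iUnion (e : X ≃ᵐ X) (B : Set X) :
    orb e B = ⋃ n : ℕ, ((⇑e)^[n] ⁻¹' B ∪ (⇑e.symm)^[n] ⁻¹' B) := by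
  ext x; simp [orb, mem_iUnion]

theorem measurableSet_orb (e : X ≃ᵐ X) {B : Set X} (hB : MeasurableSet B) :
    MeasurableSet (orb e B) := by
  rw [orb_eq_iUnion]
  exact MeasurableSet.iUnion fun n =>
    ((e.measurable.iterate n) hB).union ((e.symm.measurable.iterate n) hB)

theorem null_orb {μ : Measure X} (e : X ≃ᵐ X) (hT : MeasurePreserving (⇑e) μ μ)
    {B : Set X} (hB : MeasurableSet B) (h : μ B = 0) : μ (orb e B) = 0 := by
  rw [orb_eq_iUnion]
  refine measure_iUnion_null fun n => measure_union_null ?_ ?_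
  · rw [(hT.iterate n).measure_preimage hB.nullMeasurableSet]; exact h
  · rw [((hT.symm e).iterate n).measure_preimage hB.nullMeasurableSet]; exact h

theorem null_of_forall_no_return {μ : Measure X} [IsProbabilityMeasure μ]
    {T : X → X} (hT : MeasurePreserving T μ μ) {B : Set X} (hB : MeasurableSet B) :
    μ (B ∩ {x | ∀ l, 1 ≤ l → T^[l] x ∉ B}) = 0 := by
  set N := B ∩ {x | ∀ l, 1 ≤ l → T^[l] x ∉ B} with hN
  have hNm : MeasurableSet N := by
    refine hB.inter ?_
    have : {x | ∀ l, 1 ≤ l → T^[l] x ∉ B} = ⋂ l, ⋂ (_ : 1 ≤ l), (T^[l] ⁻¹' B)ᶜ := by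
      ext x; simp
    rw [this]
    exact MeasurableSet.iInter fun l => MeasurableSet.iInter fun _ =>
      ((hT.measurable.iterate l) hB).compl
  have hdisj : Pairwise (Function.onFun Disjoint fun j : ℕ => T^[j] ⁻¹' N) := by
    have key : ∀ a b : ℕ, a < b → Disjoint (T^[a] ⁻¹' N) (T^[b] ⁻¹' N) := by
      intro a b hlt
      refine Set.disjoint_left.2 fun x hxa hxb => ?_
      have h1 : T^[a] x ∈ N := hxa
      have h2 : T^[b] x ∈ B := hxb.1
      have h3 : T^[b - a] (T^[a] x) ∈ B := by
        rw [← Function.iterate_add_apply]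
        have : b - a + a = b := by omega
        rw [this]; exact h2
      exact h1.2 (b - a) (by omega) h3
    intro a b hab
    rcases lt_or_gt_of_ne hab with h | h
    · exact key a b h
    · exact (key b a h).symm
  by_contra h0
  have hpre : ∀ j : ℕ, μ (T^[j] ⁻¹' N) = μ N := fun j =>
    (hT.iterate j).measure_preimage hNm.nullMeasurableSet
  have htop : μ (⋃ j : ℕ, T^[j] ⁻¹' N) = ⊤ := by
    rw [measure_iUnion hdisj fun j => (hT.measurable.iterate j) hNm]
    simp only [hpre]
    exact ENNReal.tsum_const_eq_top_of_ne_zero h0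
  have h1 : μ (⋃ j : ℕ, T^[j] ⁻¹' N) ≤ 1 := prob_le_one
  rw [htop] at h1
  simp at h1

theorem forward_sweep {μ : Measure X} [IsProbabilityMeasure μ]
    (e : X ≃ᵐ X) (hT : MeasurePreserving (⇑e) μ μ) {B : Set X} (hB : MeasurableSet B)
    (h : μ (orb e B)ᶜ = 0) :
    μ {x | ∀ i : ℕ, (⇑e.symm)^[i] x ∉ B} = 0 := by
  set W := ⋃ i : ℕ, (⇑e.symm)^[i] ⁻¹' B with hW
  have hWm : MeasurableSet W :=
    MeasurableSet.iUnion fun i => (e.symm.measurable.iterate i) hB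
  have hgoal : {x | ∀ i : ℕ, (⇑e.symm)^[i] x ∉ B} = Wᶜ := by
    ext x; simp [hW]
  rw [hgoal]
  -- e ⁻¹' W = e ⁻¹' B ∪ W
  have hpre : ⇑e ⁻¹' W = ⇑e ⁻¹' B ∪ W := by
    ext x
    simp only [hW, mem_preimage, mem_iUnion, mem_union]
    constructor
    · rintro ⟨i, hi⟩
      cases i with
      | zero => exact Or.inl (by simpa using hi)
      | succ i =>
        rw [Function.iterate_succ_apply, e.symm_apply_apply] at hi
        exact Or.inr ⟨i, hi⟩
    · rintro (hx | ⟨i, hi⟩)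
      · exact ⟨0, by simpa using hx⟩
      · refine ⟨i + 1, ?_⟩
        rw [Function.iterate_succ_apply, e.symm_apply_apply]
        exact hi
  have hWfin : μ W ≠ ⊤ := measure_ne_top μ W
  have hkey : μ (⇑e ⁻¹' W \ W) = 0 := by
    have hsub : W ⊆ ⇑e ⁻¹' W := by rw [hpre]; exact subset_union_right
    have hμeq : μ (⇑e ⁻¹' W) = μ W := hT.measure_preimage hWm.nullMeasurableSet
    rw [measure_diff hsub hWm.nullMeasurableSet hWfin, hμeq, tsub_self]
  have hiter : ∀ j : ℕ, μ ((⇑e)^[j] ⁻¹' W \ W) = 0 := by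
    intro j
    induction j with
    | zero => simp
    | succ j ih =>
      have hsub : (⇑e)^[j+1] ⁻¹' W \ W ⊆
          ((⇑e)^[j] ⁻¹' (⇑e ⁻¹' W \ W)) ∪ ((⇑e)^[j] ⁻¹' W \ W) := by
        intro x hx
        obtain ⟨hx1, hx2⟩ := hx
        by_cases hmid : (⇑e)^[j] x ∈ W
        · exact Or.inr ⟨hmid, hx2⟩
        · left
          refine ⟨?_, hmid⟩
          rw [mem_preimage] at hx1 ⊢
          rw [Function.iterate_succ_apply'] at hx1
          exact hx1
      refine measure_mono_null hsub (measure_union_null ?_ ih)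
      rw [(hT.iterate j).measure_preimage]
      · exact hkey
      · exact ((e.measurable hWm).diff hWm).nullMeasurableSet
  have horb : (orb e B) ⊆ W ∪ ⋃ j : ℕ, ((⇑e)^[j] ⁻¹' W \ W) := by
    rintro x ⟨m, hm | hm⟩
    · have hxW : x ∈ (⇑e)^[m] ⁻¹' W := by
        rw [mem_preimage]; exact mem_iUnion.2 ⟨0, by simpa using hm⟩
      by_cases hW' : x ∈ W
      · exact Or.inl hW'
      · exact Or.inr (mem_iUnion.2 ⟨m, hxW, hW'⟩)
    · exact Or.inl (mem_iUnion.2 ⟨m, hm⟩)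
  have : Wᶜ ⊆ (orb e B)ᶜ ∪ ⋃ j : ℕ, ((⇑e)^[j] ⁻¹' W \ W) := by
    intro x hx
    by_cases hx2 : x ∈ orb e B
    · rcases horb hx2 with h' | h'
      · exact absurd h' hx
      · exact Or.inr h'
    · exact Or.inl hx2
  exact measure_mono_null this (measure_union_null h (measure_iUnion_null hiter))

theorem exists_sweepout [StandardBorelSpace X] {μ : Measure X} [IsProbabilityMeasure μ]
    (e : X ≃ᵐ X) (hT : MeasurePreserving (⇑e) μ μ)
    (hap : ∀ n : ℕ, 1 ≤ n → μ {x : X | (⇑e)^[n] x = x} = 0) (n : ℕ) :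
    ∃ B : Set X, MeasurableSet B ∧
      (∀ i, 1 ≤ i → i < n → B ∩ (⇑e)^[i] ⁻¹' B = ∅) ∧
      μ (orb e B)ᶜ = 0 := by
  obtain ⟨E, hEm, hEsep⟩ := exists_seq_separating X MeasurableSet.empty univ
  -- complement-closed separating family indexed by ℕ × Bool
  set W : ℕ × Bool → Set X := fun p => if p.2 then E p.1 else (E p.1)ᶜ with hWdef
  have hWm : ∀ p, MeasurableSet (W p) := by
    rintro ⟨j, b⟩
    cases b
    · exact (hEm j).compl
    · exact hEm j
  have hWsep : ∀ x y : X, x ≠ y → ∃ p, x ∈ W p ∧ y ∉ W p := by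
    intro x y hxy
    by_contra hcon
    push_neg at hcon
    refine hxy (hEsep x (mem_univ x) y (mem_univ y) fun j => ?_)
    constructor
    · intro hx
      exact hcon (j, true) hx
    · intro hy
      by_contra hx
      exact (hcon (j, false) hx) hy
  -- the basic sets with disjoint iterates
  set C : (Fin n → ℕ × Bool) → Set X := fun v =>
    ⋂ (i : Fin n), (if (i : ℕ) = 0 then univ else W (v i) \ (⇑e)^[(i : ℕ)] ⁻¹' W (v i))
    with hCdef
  have hCm : ∀ v, MeasurableSet (C v) := by
    intro v
    refine MeasurableSet.iInter fun i => ?_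
    split_ifs
    · exact MeasurableSet.univ
    · exact (hWm _).diff ((e.measurable.iterate _) (hWm _))
  have hCmem : ∀ v x, x ∈ C v ↔
      ∀ i : Fin n, (i : ℕ) ≠ 0 → (x ∈ W (v i) ∧ (⇑e)^[(i : ℕ)] x ∉ W (v i)) := by
    intro v x
    simp only [hCdef, mem_iInter]
    constructor
    · intro h i hi
      have := h i
      rw [if_neg hi] at this
      exact this
    · intro h i
      by_cases hi : (i : ℕ) = 0
      · rw [if_pos hi]; trivial
      · rw [if_neg hi]; exact h i hi
  -- aperiodic points are covered
  set Ap : Set X := {x | ∀ i, 1 ≤ i → i < n → (⇑e)^[i] x ≠ x} with hApdef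
  have hApnull : μ Apᶜ = 0 := by
    have : Apᶜ ⊆ ⋃ (i : ℕ) (_ : 1 ≤ i) (_ : i < n), {x | (⇑e)^[i] x = x} := by
      intro x hx
      simp only [hApdef, mem_compl_iff, mem_setOf_eq] at hx
      push_neg at hx
      obtain ⟨i, h1, h2, h3⟩ := hx
      simp only [mem_iUnion]
      exact ⟨i, h1, h2, h3⟩
    refine measure_mono_null this ?_
    refine measure_iUnion_null fun i => ?_
    by_cases h1 : 1 ≤ i
    · simp only [h1, iUnion_true]
      by_cases h2 : i < n
      · simp only [h2, iUnion_true]; exact hap i h1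
      · simp [h2]
    · simp [h1]
  have hcover : ∀ x ∈ Ap, ∃ v, x ∈ C v := by
    intro x hx
    have hchoice : ∀ i : Fin n, ∃ p, (i : ℕ) ≠ 0 → (x ∈ W p ∧ (⇑e)^[(i : ℕ)] x ∉ W p) := by
      intro i
      by_cases hi : (i : ℕ) = 0
      · exact ⟨(0, true), fun h => absurd hi h⟩
      · have hne : x ≠ (⇑e)^[(i : ℕ)] x := by
          intro heq
          exact hx (i : ℕ) (by omega) i.2 heq.symm
        obtain ⟨p, hp1, hp2⟩ := hWsep x ((⇑e)^[(i : ℕ)] x) hne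
        exact ⟨p, fun _ => ⟨hp1, hp2⟩⟩
    choose v hv using hchoice
    exact ⟨v, (hCmem v x).2 hv⟩
  -- enumerate the index type
  obtain ⟨g, hg⟩ := exists_surjective_nat (Fin n → ℕ × Bool)
  -- disjointify the orbits
  set C' : ℕ → Set X := fun t =>
    C (g t) \ ⋃ (s : ℕ) (_ : s < t), orb e (C (g s)) with hC'def
  have hC'm : ∀ t, MeasurableSet (C' t) := fun t =>
    (hCm _).diff (MeasurableSet.iUnion fun s => MeasurableSet.iUnion fun _ =>
      measurableSet_orb e (hCm _))
  refine ⟨⋃ t, C' t, MeasurableSet.iUnion hC'm, ?_, ?_⟩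
  · -- disjointness of iterates
    intro i hi1 hin
    ext x
    simp only [mem_inter_iff, mem_iUnion, mem_preimage, mem_empty_iff_false, iff_false]
    rintro ⟨⟨t, hxt⟩, ⟨s, hxs⟩⟩
    rcases lt_trichotomy t s with hts | rfl | hst
    · -- T^[i] x ∈ C' s avoids orb (C (g t)), but x ∈ C (g t)
      have h1 : (⇑e)^[i] x ∉ orb e (C (g t)) := by
        intro hmem
        exact hxs.2 (mem_iUnion.2 ⟨t, mem_iUnion.2 ⟨hts, hmem⟩⟩)
      refine h1 (orb_trans e (subset_orb e _ hxt.1) ⟨i, Or.inr ?_⟩)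
      have hli : Function.LeftInverse ⇑e.symm ⇑e := fun y => e.symm_apply_apply y
      rw [(hli.iterate i) x]
    · -- same tower: contradiction with the defining property at index i
      have hifin : i < n := hin
      have h1 := (hCmem (g t) x).1 hxt.1 ⟨i, hifin⟩ (by simpa using by omega)
      have h2 := (hCmem (g t) ((⇑e)^[i] x)).1 hxs.1 ⟨i, hifin⟩ (by simpa using by omega)
      exact h1.2 h2.1
    · -- x ∈ C' t avoids orb (C (g s)), but T^[i] x ∈ C (g s)
      have h1 : x ∉ orb e (C (g s)) := by
        intro hmem
        exact hxt.2 (mem_iUnion.2 ⟨s, mem_iUnion.2 ⟨hst, hmem⟩⟩)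
      exact h1 ⟨i, Or.inl hxs.1⟩
  · -- sweep-out
    have hstep : ∀ t, orb e (C (g t)) ⊆ ⋃ s, orb e (C' s) := by
      intro t
      induction t using Nat.strong_induction_on with
      | _ t ih =>
        rintro x ⟨m, hm⟩
        have hy : ∃ y, (y = (⇑e)^[m] x ∨ y = (⇑e.symm)^[m] x) ∧ y ∈ C (g t) := by
          rcases hm with hm | hm
          · exact ⟨(⇑e)^[m] x, Or.inl rfl, hm⟩
          · exact ⟨(⇑e.symm)^[m] x, Or.inr rfl, hm⟩
        obtain ⟨y, hy1, hy2⟩ := hy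
        by_cases hyC' : y ∈ C' t
        · refine mem_iUnion.2 ⟨t, ?_⟩
          refine orb_trans e (subset_orb e _ hyC') ⟨m, hy1⟩
        · have : y ∈ ⋃ (s : ℕ) (_ : s < t), orb e (C (g s)) := by
            by_contra hcon
            exact hyC' ⟨hy2, hcon⟩
          simp only [mem_iUnion] at this
          obtain ⟨s, hst, hys⟩ := this
          exact ih s hst (orb_trans e hys ⟨m, hy1⟩)
    have hsub : (orb e (⋃ t, C' t))ᶜ ⊆ Apᶜ := by
      intro x hx
      intro hxAp
      obtain ⟨v, hv⟩ := hcover x hxAp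
      obtain ⟨t, rfl⟩ := hg v
      have : x ∈ ⋃ s, orb e (C' s) := hstep t (subset_orb e _ hv)
      obtain ⟨s, hs⟩ := mem_iUnion.1 this
      exact hx (orb_mono e (subset_iUnion C' s) hs)
    exact measure_mono_null hsub hApnull

open Encodable

open Classical in
noncomputable def pfin (D : ℕ → Set X) (m : ℕ) (x : X) : Finset ℕ :=
  (Finset.range (m+1)).filter (fun k => x ∈ D k)

noncomputable def pcode (D : ℕ → Set X) (m : ℕ) (x : X) : ℕ := encode (pfin D m x)

/-- first entrance time `≥ 1` into `F` (0 if none) -/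
noncomputable def rtime (T : X → X) (F : Set X) (x : X) : ℕ :=
  sInf {l | 1 ≤ l ∧ T^[l] x ∈ F}

noncomputable def nlist (T : X → X) (D : ℕ → Set X) (F : Set X) (m : ℕ) (x : X) : List ℕ :=
  (List.range (rtime T F x)).map fun l => pcode D m (T^[l] x)

noncomputable def cname (T : X → X) (D : ℕ → Set X) (F : Set X) (m : ℕ) (x : X) : ℕ :=
  encode (nlist T D F m x)

open Classical in
noncomputable def bigcode (T : X → X) (D : ℕ → Set X) (F : ℕ → Set X) (x : X) : ℕ :=
  if h : {m | x ∈ F m}.Finite then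
    encode (h.toFinset.image fun m => (m, cname T D (F m) m x))
  else 0

theorem mem_pfin (D : ℕ → Set X) (m : ℕ) (x : X) (k : ℕ) :
    k ∈ pfin D m x ↔ k < m + 1 ∧ x ∈ D k := by
  classical
  simp [pfin, Finset.mem_filter, Finset.mem_range]

theorem measurable_pfin_fiber {D : ℕ → Set X} (hD : ∀ k, MeasurableSet (D k)) (m : ℕ)
    (S : Finset ℕ) : MeasurableSet {x | pfin D m x = S} := by
  classical
  have heq : {x | pfin D m x = S} =
      (⋂ k ∈ Finset.range (m+1), {x | k ∈ S ↔ x ∈ D k}) ∩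
        {x : X | ∀ k ∈ S, k < m + 1} := by
    ext x
    simp only [mem_setOf_eq, mem_inter_iff, mem_iInter]
    constructor
    · rintro rfl
      refine ⟨fun k hk => ?_, fun k hk => ((mem_pfin D m x k).1 hk).1⟩
      rw [mem_pfin]
      rw [Finset.mem_range] at hk
      simp [hk]
    · rintro ⟨h1, h2⟩
      apply Finset.ext
      intro k
      rw [mem_pfin]
      constructor
      · rintro ⟨hk, hD'⟩
        exact (h1 k (Finset.mem_range.2 hk)).2 hD'
      · intro hk
        exact ⟨h2 k hk, (h1 k (Finset.mem_range.2 (h2 k hk))).1 hk⟩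
  rw [heq]
  refine MeasurableSet.inter ?_ ?_
  · refine MeasurableSet.biInter (Finset.range (m+1)).countable_toSet fun k _ => ?_
    have : {x : X | k ∈ S ↔ x ∈ D k} = if k ∈ S then D k else (D k)ᶜ := by
      split_ifs with h
      · ext y; simp [h]
      · ext y; simp [h]
    rw [this]
    split_ifs
    · exact hD k
    · exact (hD k).compl
  · have hconst : {x : X | ∀ k ∈ S, k < m + 1} =
        if (∀ k ∈ S, k < m + 1) then univ else (∅ : Set X) := by
      split_ifs with h
      · ext x; simp only [mem_setOf_eq, mem_univ, iff_true]; exact h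
      · ext x; simp only [mem_setOf_eq, mem_empty_iff_false, iff_false]; exact h
    rw [hconst]
    split_ifs
    · exact MeasurableSet.univ
    · exact MeasurableSet.empty

theorem measurable_pcode {D : ℕ → Set X} (hD : ∀ k, MeasurableSet (D k)) (m : ℕ) :
    Measurable (pcode D m) := by
  refine measurable_to_countable' fun v => ?_
  have : pcode D m ⁻¹' {v} = ⋃ (S : Finset ℕ) (_ : encode S = v), {x | pfin D m x = S} := by
    ext x
    simp only [mem_preimage, mem_singleton_iff, mem_iUnion, pcode, mem_setOf_eq]
    constructor
    · rintro rfl; exact ⟨pfin D m x, rfl, rfl⟩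
    · rintro ⟨S, rfl, h⟩; rw [h]
  rw [this]
  exact MeasurableSet.iUnion fun S => MeasurableSet.iUnion fun _ =>
    measurable_pfin_fiber hD m S

theorem rtime_eq_iff {T : X → X} {F : Set X} {x : X} {w : ℕ} :
    rtime T F x = w + 1 ↔ (T^[w+1] x ∈ F ∧ ∀ l, 1 ≤ l → l ≤ w → T^[l] x ∉ F) := by
  constructor
  · intro h
    have hne : {l | 1 ≤ l ∧ T^[l] x ∈ F}.Nonempty := by
      by_contra hc
      rw [not_nonempty_iff_eq_empty] at hc
      have h0 : rtime T F x = 0 := by unfold rtime; rw [hc]; exact Nat.sInf_empty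
      omega
    have hmem := Nat.sInf_mem hne
    have hmem2 : (w+1) ∈ {l | 1 ≤ l ∧ T^[l] x ∈ F} := by rw [← h]; exact hmem
    refine ⟨hmem2.2, fun l hl1 hl2 hlF => ?_⟩
    have hsle : rtime T F x ≤ l := Nat.sInf_le ⟨hl1, hlF⟩
    omega
  · rintro ⟨h1, h2⟩
    have hle : rtime T F x ≤ w + 1 := Nat.sInf_le ⟨by omega, h1⟩
    have hne : {l | 1 ≤ l ∧ T^[l] x ∈ F}.Nonempty := ⟨w+1, by omega, h1⟩
    have hmem := Nat.sInf_mem hne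
    have hmem1 : 1 ≤ rtime T F x := hmem.1
    have hmem2 : T^[rtime T F x] x ∈ F := hmem.2
    rcases Nat.lt_or_ge (rtime T F x) (w+1) with h | h
    · exact absurd hmem2 (h2 _ hmem1 (by omega))
    · omega

theorem rtime_eq_zero_iff {T : X → X} {F : Set X} {x : X} :
    rtime T F x = 0 ↔ ∀ l, 1 ≤ l → T^[l] x ∉ F := by
  constructor
  · intro h l hl hlF
    have hne : {l | 1 ≤ l ∧ T^[l] x ∈ F}.Nonempty := ⟨l, hl, hlF⟩
    have hmem1 : 1 ≤ rtime T F x := (Nat.sInf_mem hne).1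
    omega
  · intro h
    have : {l | 1 ≤ l ∧ T^[l] x ∈ F} = ∅ := by
      ext l; simp only [mem_setOf_eq, mem_empty_iff_false, iff_false, not_and]
      exact fun hl => h l hl
    unfold rtime
    rw [this, Nat.sInf_empty]

theorem measurable_rtime {T : X → X} (hT : Measurable T) {F : Set X}
    (hF : MeasurableSet F) : Measurable (rtime T F) := by
  refine measurable_to_countable' fun v => ?_
  cases v with
  | zero =>
    have : rtime T F ⁻¹' {0} = ⋂ (l : ℕ) (_ : 1 ≤ l), (T^[l] ⁻¹' F)ᶜ := by
      ext x
      simp only [mem_preimage, mem_singleton_iff, mem_iInter, mem_compl_iff,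
        rtime_eq_zero_iff]
    rw [this]
    exact MeasurableSet.iInter fun l => MeasurableSet.iInter fun _ =>
      ((hT.iterate l) hF).compl
  | succ w =>
    have : rtime T F ⁻¹' {w+1} =
        (T^[w+1] ⁻¹' F) ∩ ⋂ (l : ℕ) (_ : 1 ≤ l) (_ : l ≤ w), (T^[l] ⁻¹' F)ᶜ := by
      ext x
      simp only [mem_preimage, mem_singleton_iff, mem_inter_iff, mem_iInter,
        mem_compl_iff, rtime_eq_iff]
    rw [this]
    exact ((hT.iterate (w+1)) hF).inter
      (MeasurableSet.iInter fun l => MeasurableSet.iInter fun _ =>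
        MeasurableSet.iInter fun _ => ((hT.iterate l) hF).compl)

theorem measurable_cname {T : X → X} (hT : Measurable T) {D : ℕ → Set X}
    (hD : ∀ k, MeasurableSet (D k)) {F : Set X} (hF : MeasurableSet F) (m : ℕ) :
    Measurable (cname T D F m) := by
  have hnl : ∀ L : List ℕ, MeasurableSet {x | nlist T D F m x = L} := by
    intro L
    have heq : {x | nlist T D F m x = L} =
        {x | rtime T F x = L.length} ∩
          ⋂ (l : ℕ) (_ : l < L.length), {x | L[l]? = some (pcode D m (T^[l] x))} := by
      ext x
      simp only [mem_setOf_eq, mem_inter_iff, mem_iInter]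
      constructor
      · rintro rfl
        refine ⟨by simp [nlist], fun l hl => ?_⟩
        simp only [nlist, List.length_map, List.length_range] at hl
        simp [nlist, List.getElem?_map, List.getElem?_range, hl]
      · rintro ⟨h1, h2⟩
        apply List.ext_getElem?
        intro l
        by_cases hl : l < L.length
        · rw [h2 l hl]
          simp [nlist, List.getElem?_map, List.getElem?_range, h1 ▸ hl]
        · have hlen : (nlist T D F m x).length = L.length := by
            simp [nlist, h1]
          rw [List.getElem?_eq_none (by rw [hlen]; omega),
            List.getElem?_eq_none (by omega)]
    rw [heq]
    refine (measurable_rtime hT hF (measurableSet_singleton L.length)).inter ?_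
    refine MeasurableSet.iInter fun l => MeasurableSet.iInter fun _ => ?_
    exact ((measurable_pcode hD m).comp (hT.iterate l))
      (show MeasurableSet {w : ℕ | L[l]? = some w} from .of_discrete)
  refine measurable_to_countable' fun v => ?_
  have heq2 : cname T D F m ⁻¹' {v} =
      ⋃ (L : List ℕ) (_ : encode L = v), {x | nlist T D F m x = L} := by
    ext x
    simp only [mem_preimage, mem_singleton_iff, mem_iUnion, cname, mem_setOf_eq]
    constructor
    · rintro rfl; exact ⟨nlist T D F m x, rfl, rfl⟩
    · rintro ⟨L, rfl, h⟩; rw [h]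
  rw [heq2]
  exact MeasurableSet.iUnion fun L => MeasurableSet.iUnion fun _ => hnl L

theorem infinite_iff_unbounded {s : Set ℕ} : s.Infinite ↔ ∀ N : ℕ, ∃ m, N ≤ m ∧ m ∈ s := by
  constructor
  · intro h N
    obtain ⟨m, hm, hlt⟩ := h.exists_gt N
    exact ⟨m, by omega, hm⟩
  · intro h hfin
    obtain ⟨N, hN⟩ := hfin.bddAbove
    obtain ⟨m, hm1, hm2⟩ := h (N + 1)
    have := hN hm2
    omega

theorem bigcode_eq_of_finite {T : X → X} {D : ℕ → Set X} {F : ℕ → Set X} {x : X}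
    (h : {m | x ∈ F m}.Finite) :
    bigcode T D F x = encode (h.toFinset.image fun m => (m, cname T D (F m) m x)) :=
  dif_pos h

theorem measurable_bigcode {T : X → X} (hT : Measurable T) {D : ℕ → Set X}
    (hD : ∀ k, MeasurableSet (D k)) {F : ℕ → Set X} (hF : ∀ m, MeasurableSet (F m)) :
    Measurable (bigcode T D F) := by
  classical
  have hInfm : MeasurableSet {x : X | ¬ {m | x ∈ F m}.Finite} := by
    have heq : {x : X | ¬ {m | x ∈ F m}.Finite} = ⋂ N, ⋃ m, ⋃ (_ : N ≤ m), F m := by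
      ext x
      simp only [mem_setOf_eq, mem_iInter, mem_iUnion]
      constructor
      · intro h N
        obtain ⟨m, h1, h2⟩ := infinite_iff_unbounded.1 h N
        exact ⟨m, h1, h2⟩
      · intro h
        refine infinite_iff_unbounded.2 fun N => ?_
        obtain ⟨m, h1, h2⟩ := h N
        exact ⟨m, h1, h2⟩
    rw [heq]
    exact MeasurableSet.iInter fun N => MeasurableSet.iUnion fun m =>
      MeasurableSet.iUnion fun _ => hF m
  have hΓ : ∀ S : Finset (ℕ × ℕ), MeasurableSet {x : X |
      (∀ p ∈ S, x ∈ F p.1 ∧ cname T D (F p.1) p.1 x = p.2) ∧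
      (∀ m : ℕ, x ∈ F m → (m, cname T D (F m) m x) ∈ S)} := by
    intro S
    have heq : {x : X |
        (∀ p ∈ S, x ∈ F p.1 ∧ cname T D (F p.1) p.1 x = p.2) ∧
        (∀ m : ℕ, x ∈ F m → (m, cname T D (F m) m x) ∈ S)} =
        (⋂ (p : ℕ × ℕ) (_ : p ∈ S), (F p.1 ∩ {x | cname T D (F p.1) p.1 x = p.2})) ∩
        (⋂ m : ℕ, ((F m)ᶜ ∪ {x | (m, cname T D (F m) m x) ∈ S})) := by
      ext x
      simp only [mem_setOf_eq, mem_inter_iff, mem_iInter, mem_union, mem_compl_iff]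
      constructor
      · rintro ⟨h1, h2⟩
        refine ⟨fun p hp => h1 p hp, fun m => ?_⟩
        by_cases hm : x ∈ F m
        · exact Or.inr (h2 m hm)
        · exact Or.inl hm
      · rintro ⟨h1, h2⟩
        refine ⟨h1, fun m hm => ?_⟩
        rcases h2 m with h | h
        · exact absurd hm h
        · exact h
    rw [heq]
    refine MeasurableSet.inter ?_ ?_
    · refine MeasurableSet.iInter fun p => MeasurableSet.iInter fun _ => ?_
      exact (hF p.1).inter
        ((measurable_cname hT hD (hF p.1) p.1) (measurableSet_singleton p.2))
    · refine MeasurableSet.iInter fun m => ?_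
      refine MeasurableSet.union (hF m).compl ?_
      exact (measurable_cname hT hD (hF m) m)
        (show MeasurableSet {c : ℕ | (m, c) ∈ S} from .of_discrete)
  refine measurable_to_countable' fun v => ?_
  have hfib : bigcode T D F ⁻¹' {v} =
      ({x : X | ¬ {m | x ∈ F m}.Finite} ∩ {x : X | (0 : ℕ) = v}) ∪
      ⋃ (S : Finset (ℕ × ℕ)) (_ : encode S = v), {x : X |
        (∀ p ∈ S, x ∈ F p.1 ∧ cname T D (F p.1) p.1 x = p.2) ∧
        (∀ m : ℕ, x ∈ F m → (m, cname T D (F m) m x) ∈ S)} := by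
    ext x
    simp only [mem_preimage, mem_singleton_iff, mem_union, mem_inter_iff, mem_iUnion,
      mem_setOf_eq]
    by_cases hfin : {m | x ∈ F m}.Finite
    · rw [bigcode_eq_of_finite (T := T) (D := D) hfin]
      constructor
      · rintro rfl
        refine Or.inr ⟨hfin.toFinset.image fun m => (m, cname T D (F m) m x), rfl,
          fun p hp => ?_, fun m hm => ?_⟩
        · obtain ⟨m', hm', rfl⟩ := Finset.mem_image.1 hp
          exact ⟨hfin.mem_toFinset.1 hm', rfl⟩
        · exact Finset.mem_image_of_mem _ (hfin.mem_toFinset.2 hm)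
      · rintro (⟨hinf, _⟩ | ⟨S, rfl, h1, h2⟩)
        · exact absurd hfin hinf
        · congr 1
          apply Finset.ext
          rintro ⟨m, c⟩
          constructor
          · intro hp
            obtain ⟨m', hm', heq'⟩ := Finset.mem_image.1 hp
            rw [← heq']
            exact h2 m' (hfin.mem_toFinset.1 hm')
          · intro hp
            obtain ⟨hxF, hc⟩ := h1 _ hp
            have : (m, c) = (m, cname T D (F m) m x) := by rw [hc]
            rw [this]
            exact Finset.mem_image_of_mem _ (hfin.mem_toFinset.2 hxF)
    · have h0 : bigcode T D F x = 0 := dif_neg hfin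
      rw [h0]
      constructor
      · rintro rfl
        exact Or.inl ⟨hfin, rfl⟩
      · rintro (⟨_, h⟩ | ⟨S, rfl, h1, h2⟩)
        · exact h
        · exfalso
          refine hfin (Set.Finite.subset (S.image Prod.fst).finite_toSet ?_)
          intro m hm
          simp only [Finset.coe_image, mem_image, Finset.mem_coe]
          exact ⟨(m, cname T D (F m) m x), h2 m hm, rfl⟩
  rw [hfib]
  refine MeasurableSet.union (hInfm.inter ?_) ?_
  · by_cases h : (0 : ℕ) = v
    · have : {x : X | (0:ℕ) = v} = univ := by ext x; simp [h]
      rw [this]; exact MeasurableSet.univ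
    · have : {x : X | (0:ℕ) = v} = ∅ := by ext x; simp [h]
      rw [this]; exact MeasurableSet.empty
  · exact MeasurableSet.iUnion fun S => MeasurableSet.iUnion fun _ => hΓ S

section AnyM

variable {α : Type*} {M : MeasurableSpace α}

theorem mset_empty : MeasurableSet[M] (∅ : Set α) := by
  letI := M; exact MeasurableSet.empty

theorem mset_compl {s : Set α} (h : MeasurableSet[M] s) : MeasurableSet[M] sᶜ := by
  letI := M; exact h.compl

theorem mset_inter {s t : Set α} (hs : MeasurableSet[M] s) (ht : MeasurableSet[M] t) :
    MeasurableSet[M] (s ∩ t) := by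
  letI := M; exact hs.inter ht

theorem mset_iUnion {s : ℕ → Set α} (h : ∀ i, MeasurableSet[M] (s i)) :
    MeasurableSet[M] (⋃ i, s i) := by
  letI := M; exact MeasurableSet.iUnion h

theorem mset_iInter_lt {j : ℕ} {s : ℕ → Set α} (h : ∀ i, MeasurableSet[M] (s i)) :
    MeasurableSet[M] (⋂ (i : ℕ) (_ : i < j), s i) := by
  letI := M
  exact MeasurableSet.iInter fun i => MeasurableSet.iInter fun _ => h i

end AnyM

def approxAlg (μ : Measure X) (M : MeasurableSpace X) : MeasurableSpace X where
  MeasurableSet' A := ∃ B, MeasurableSet[M] B ∧ μ (symmDiff A B) = 0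
  measurableSet_empty := ⟨∅, mset_empty, by simp⟩
  measurableSet_compl := by
    rintro A ⟨B, hB, hAB⟩
    exact ⟨Bᶜ, mset_compl hB, by rwa [compl_symmDiff_compl]⟩
  measurableSet_iUnion := by
    rintro s hs
    choose B hB hABnull using hs
    refine ⟨⋃ i, B i, mset_iUnion hB, ?_⟩
    refine measure_mono_null ?_ (measure_iUnion_null hABnull)
    intro x hx
    rw [Set.mem_symmDiff] at hx
    rcases hx with ⟨h1, h2⟩ | ⟨h1, h2⟩
    · obtain ⟨i, hi⟩ := mem_iUnion.1 h1
      refine mem_iUnion.2 ⟨i, ?_⟩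
      rw [Set.mem_symmDiff]
      exact Or.inl ⟨hi, fun hc => h2 (mem_iUnion.2 ⟨i, hc⟩)⟩
    · obtain ⟨i, hi⟩ := mem_iUnion.1 h1
      refine mem_iUnion.2 ⟨i, ?_⟩
      rw [Set.mem_symmDiff]
      exact Or.inr ⟨hi, fun hc => h2 (mem_iUnion.2 ⟨i, hc⟩)⟩

def genAlg (e : X ≃ᵐ X) (f : X → ℕ) : MeasurableSpace X :=
  ⨆ n : ℤ, MeasurableSpace.comap (fun x => f (zIter e n x)) (⊤ : MeasurableSpace ℕ)

theorem mset_coord (e : X ≃ᵐ X) (f : X → ℕ) (j : ℕ) (A : Set ℕ) :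
    MeasurableSet[genAlg e f] ((fun x => f ((⇑e.symm)^[j] x)) ⁻¹' A) := by
  have hle : MeasurableSpace.comap (fun x => f (zIter e (-(j : ℤ)) x))
      (⊤ : MeasurableSpace ℕ) ≤ genAlg e f :=
    le_iSup (fun n : ℤ => MeasurableSpace.comap (fun x => f (zIter e n x))
      (⊤ : MeasurableSpace ℕ)) (-(j : ℤ))
  refine hle _ ⟨A, trivial, ?_⟩
  have heq : (fun x => f (zIter e (-(j : ℤ)) x)) = (fun x => f ((⇑e.symm)^[j] x)) := by
    funext x
    rw [zIter_neg_natCast]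
  rw [heq]

end RokhlinAux

open RokhlinAux Encodable in
/-- Rokhlin's countable generator theorem: an invertible aperiodic
measure-preserving transformation of a nonatomic standard Borel probability space
has a countable two-sided generator `f : X → ℕ`: every measurable set agrees mod 0
with a set in the σ-algebra generated by the maps `f ∘ T^n`, `n ∈ ℤ`. -/
theorem rokhlin_countable_generator {X : Type*} [MeasurableSpace X] [StandardBorelSpace X]
    (μ : Measure X) [IsProbabilityMeasure μ] [NullSingletonClass μ]
    (e : X ≃ᵐ X) (hT : MeasurePreserving (⇑e) μ μ)
    (hap : ∀ n : ℕ, 1 ≤ n → μ {x : X | (⇑e)^[n] x = x} = 0) :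
    ∃ f : X → ℕ, Measurable f ∧
      ∀ A : Set X, MeasurableSet A →
        ∃ B : Set X,
          MeasurableSet[⨆ n : ℤ,
            MeasurableSpace.comap (fun x => f (zIter e n x)) (⊤ : MeasurableSpace ℕ)] B ∧
          μ (symmDiff A B) = 0 := by
  classical
  -- a generating sequence of measurable sets
  obtain ⟨D, hD⟩ := (MeasurableSpace.countable_countableGeneratingSet (α := X)).exists_eq_range
    (MeasurableSpace.nonempty_countableGeneratingSet (α := X))
  have hDmeas : ∀ k, MeasurableSet (D k) := fun k =>
    MeasurableSpace.measurableSet_countableGeneratingSet (hD ▸ mem_range_self k)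
  -- sweep-out towers
  have hsw := fun m : ℕ => exists_sweepout e hT hap (2 ^ (m + 1))
  choose F hFm hFdisj hFsweep using hsw
  -- the generator function
  set f : X → ℕ := bigcode (⇑e) D F with hfdef
  have hfmeas : Measurable f := measurable_bigcode e.measurable hDmeas hFm
  -- each F m is small
  have hFsmall : ∀ m : ℕ, μ (F m) ≤ (2⁻¹ : ENNReal) ^ m := by
    intro m
    set n : ℕ := 2 ^ (m + 1) with hn
    have hdisj2 : ∀ a b : ℕ, a < b → b < n →
        Disjoint ((⇑e)^[a] ⁻¹' F m) ((⇑e)^[b] ⁻¹' F m) := by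
      intro a b hab hbn
      refine Set.disjoint_left.2 fun x hxa hxb => ?_
      have h1 : (⇑e)^[b - a] ((⇑e)^[a] x) ∈ F m := by
        rw [← Function.iterate_add_apply]
        have : b - a + a = b := by omega
        rw [this]; exact hxb
      have h2 := hFdisj m (b - a) (by omega) (by omega)
      have hxa' : (⇑e)^[a] x ∈ F m := hxa
      have hmem2 : (⇑e)^[a] x ∈ F m ∩ (⇑e)^[b - a] ⁻¹' F m := ⟨hxa', h1⟩
      rw [h2] at hmem2
      exact hmem2
    have hpd : (↑(Finset.range n) : Set ℕ).PairwiseDisjoint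
        (fun i => (⇑e)^[i] ⁻¹' F m) := by
      intro a ha b hb hab
      have ha' : a < n := by simpa using ha
      have hb' : b < n := by simpa using hb
      rcases lt_or_gt_of_ne hab with h | h
      · exact hdisj2 a b h hb'
      · exact (hdisj2 b a h ha').symm
    have hsum : ∑ i ∈ Finset.range n, μ ((⇑e)^[i] ⁻¹' F m) ≤ 1 := by
      rw [← measure_biUnion_finset hpd fun i _ => (e.measurable.iterate i) (hFm m)]
      exact prob_le_one
    have hconst : ∀ i, μ ((⇑e)^[i] ⁻¹' F m) = μ (F m) := fun i =>
      (hT.iterate i).measure_preimage (hFm m).nullMeasurableSet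
    have hbound : (n : ENNReal) * μ (F m) ≤ 1 := by
      calc (n : ENNReal) * μ (F m) = ∑ _i ∈ Finset.range n, μ (F m) := by
            simp [Finset.sum_const, nsmul_eq_mul]
        _ = ∑ i ∈ Finset.range n, μ ((⇑e)^[i] ⁻¹' F m) := by
            refine Finset.sum_congr rfl fun i _ => (hconst i).symm
        _ ≤ 1 := hsum
    have hn0 : (n : ENNReal) ≠ 0 := by
      have hnpos : (0:ℕ) < n := by rw [hn]; positivity
      exact Nat.cast_ne_zero.2 hnpos.ne'
    have hnt : (n : ENNReal) ≠ ⊤ := ENNReal.natCast_ne_top n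
    have hinv : μ (F m) ≤ ((n : ENNReal))⁻¹ := by
      calc μ (F m) = (n : ENNReal)⁻¹ * ((n : ENNReal) * μ (F m)) := by
            rw [← mul_assoc, ENNReal.inv_mul_cancel hn0 hnt, one_mul]
        _ ≤ (n : ENNReal)⁻¹ * 1 := mul_le_mul_right hbound _
        _ = (n : ENNReal)⁻¹ := mul_one _
    refine hinv.trans ?_
    have h2 : ((n : ENNReal))⁻¹ = (2⁻¹ : ENNReal) ^ (m + 1) := by
      rw [hn]
      push_cast
      rw [← ENNReal.inv_pow]
    rw [h2]
    exact pow_le_pow_of_le_one (by simp) (by simp) (by omega)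
  have htsum : (∑' m, μ (F m)) ≠ ⊤ := by
    refine ne_top_of_le_ne_top ?_ (ENNReal.tsum_le_tsum hFsmall)
    rw [ENNReal.tsum_geometric, ENNReal.one_sub_inv_two, inv_inv]
    exact ENNReal.ofNat_ne_top
  -- the bad (null) set and its orbit saturation
  set bad1 : Set X := ⋂ N, ⋃ m, ⋃ (_ : N ≤ m), F m with hbad1def
  have hbad1m : MeasurableSet bad1 :=
    MeasurableSet.iInter fun N => MeasurableSet.iUnion fun m =>
      MeasurableSet.iUnion fun _ => hFm m
  have hbad1null : μ bad1 = 0 := by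
    have heq : bad1 = limsup F atTop := by
      rw [limsup_eq_iInf_iSup_of_nat]
      simp only [iInf_eq_iInter, iSup_eq_iUnion]
      rfl
    rw [heq]
    exact measure_limsup_atTop_eq_zero htsum
  set bad2 : ℕ → Set X := fun m => {x | ∀ i : ℕ, (⇑e.symm)^[i] x ∉ F m} with hbad2def
  have hbad2m : ∀ m, MeasurableSet (bad2 m) := by
    intro m
    have : bad2 m = ⋂ i : ℕ, ((⇑e.symm)^[i] ⁻¹' F m)ᶜ := by
      ext x; simp [hbad2def]
    rw [this]
    exact MeasurableSet.iInter fun i => ((e.symm.measurable.iterate i) (hFm m)).compl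
  have hbad2null : ∀ m, μ (bad2 m) = 0 := fun m =>
    forward_sweep e hT (hFm m) (hFsweep m)
  set bad3 : ℕ → Set X := fun m => F m ∩ {x | ∀ l, 1 ≤ l → (⇑e)^[l] x ∉ F m} with hbad3def
  have hbad3m : ∀ m, MeasurableSet (bad3 m) := by
    intro m
    refine (hFm m).inter ?_
    have : {x | ∀ l, 1 ≤ l → (⇑e)^[l] x ∉ F m} =
        ⋂ (l : ℕ) (_ : 1 ≤ l), ((⇑e)^[l] ⁻¹' F m)ᶜ := by
      ext x; simp
    rw [this]
    exact MeasurableSet.iInter fun l => MeasurableSet.iInter fun _ =>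
      ((e.measurable.iterate l) (hFm m)).compl
  have hbad3null : ∀ m, μ (bad3 m) = 0 := fun m =>
    null_of_forall_no_return hT (hFm m)
  set Bad : Set X := bad1 ∪ ⋃ m, (bad2 m ∪ bad3 m) with hBaddef
  have hBadm : MeasurableSet Bad :=
    hbad1m.union (MeasurableSet.iUnion fun m => (hbad2m m).union (hbad3m m))
  have hBadnull : μ Bad = 0 := by
    refine measure_union_null hbad1null (measure_iUnion_null fun m =>
      measure_union_null (hbad2null m) (hbad3null m))
  set Ω : Set X := {x | ∀ i : ℕ, (⇑e)^[i] x ∉ Bad ∧ (⇑e.symm)^[i] x ∉ Bad} with hΩdef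
  have hΩnull : μ Ωᶜ = 0 := by
    have : Ωᶜ ⊆ ⋃ i : ℕ, ((⇑e)^[i] ⁻¹' Bad ∪ (⇑e.symm)^[i] ⁻¹' Bad) := by
      intro x hx
      simp only [hΩdef, mem_compl_iff, mem_setOf_eq] at hx
      push_neg at hx
      obtain ⟨i, hi⟩ := hx
      simp only [mem_iUnion, mem_union, mem_preimage]
      by_cases h1 : (⇑e)^[i] x ∈ Bad
      · exact ⟨i, Or.inl h1⟩
      · exact ⟨i, Or.inr (hi h1)⟩
    refine measure_mono_null this (measure_iUnion_null fun i => measure_union_null ?_ ?_)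
    · rw [(hT.iterate i).measure_preimage hBadm.nullMeasurableSet]; exact hBadnull
    · rw [((hT.symm e).iterate i).measure_preimage hBadm.nullMeasurableSet]; exact hBadnull
  -- coordinate measurability
  have hcoord : ∀ (j : ℕ) (A : Set ℕ),
      MeasurableSet[genAlg e f] ((fun x => f ((⇑e.symm)^[j] x)) ⁻¹' A) :=
    fun j A => mset_coord e f j A
  -- decoding sets
  set HasE : ℕ → Set ℕ := fun m =>
    {v | ∃ s ∈ decode₂ (Finset (ℕ × ℕ)) v, ∃ c, (m, c) ∈ s} with hHasEdef
  set Ent : ℕ → ℕ → ℕ → Set ℕ := fun m k j =>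
    {v | ∃ s ∈ decode₂ (Finset (ℕ × ℕ)) v, ∃ c, (m, c) ∈ s ∧
      ∃ L ∈ decode₂ (List ℕ) c, ∃ w, L[j]? = some w ∧
        ∃ t ∈ decode₂ (Finset ℕ) w, k ∈ t} with hEntdef
  set Dec : ℕ → ℕ → Set X := fun m k =>
    ⋃ j : ℕ, ((⋂ (i : ℕ) (_ : i < j), ((fun x => f ((⇑e.symm)^[i] x)) ⁻¹' HasE m)ᶜ) ∩
      ((fun x => f ((⇑e.symm)^[j] x)) ⁻¹' Ent m k j)) with hDecdef
  have hDec𝔪 : ∀ m k, MeasurableSet[genAlg e f] (Dec m k) := by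
    intro m k
    refine mset_iUnion fun j => mset_inter ?_ (hcoord j _)
    exact mset_iInter_lt fun i => mset_compl (hcoord i _)
  -- the main pointwise claim
  have hmain : ∀ x ∈ Ω, ∀ m k : ℕ, k ≤ m → (x ∈ Dec m k ↔ x ∈ D k) := by
    intro x hΩx m k hkm
    have hnotbad : ∀ i : ℕ, (⇑e)^[i] x ∉ Bad ∧ (⇑e.symm)^[i] x ∉ Bad := hΩx
    -- finiteness of the marker sets along the orbit
    have hfin : ∀ j : ℕ, {m' | (⇑e.symm)^[j] x ∈ F m'}.Finite := by
      intro j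
      by_contra hinf
      refine (hnotbad j).2 (Or.inl ?_)
      simp only [hbad1def, mem_iInter, mem_iUnion]
      intro N
      obtain ⟨m', hm1, hm2⟩ := infinite_iff_unbounded.1 hinf N
      exact ⟨m', hm1, hm2⟩
    have hfval : ∀ j : ℕ, f ((⇑e.symm)^[j] x) =
        encode ((hfin j).toFinset.image fun m' =>
          (m', cname (⇑e) D (F m') m' ((⇑e.symm)^[j] x))) := fun j =>
      bigcode_eq_of_finite (hfin j)
    -- having an `m`-entry means being in `F m`
    have hasE_iff : ∀ j : ℕ, f ((⇑e.symm)^[j] x) ∈ HasE m ↔ (⇑e.symm)^[j] x ∈ F m := by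
      intro j
      rw [hfval j]
      simp only [hHasEdef, mem_setOf_eq]
      constructor
      · rintro ⟨s, hs, c, hc⟩
        rw [decode₂_encode, Option.mem_some_iff] at hs
        subst hs
        obtain ⟨m', hm', heq'⟩ := Finset.mem_image.1 hc
        have hmm : m' = m := congrArg Prod.fst heq'
        subst hmm
        exact (hfin j).mem_toFinset.1 hm'
      · intro hmem
        refine ⟨_, by rw [decode₂_encode]; rfl,
          cname (⇑e) D (F m) m ((⇑e.symm)^[j] x), ?_⟩
        exact Finset.mem_image_of_mem _ ((hfin j).mem_toFinset.2 hmem)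
    -- the first backward hitting time of F m
    have hhit : ∃ i : ℕ, (⇑e.symm)^[i] x ∈ F m := by
      by_contra hc
      push_neg at hc
      refine (hnotbad 0).1 (Or.inr ?_)
      refine mem_iUnion.2 ⟨m, Or.inl ?_⟩
      simp only [hbad2def, mem_setOf_eq]
      simpa using hc
    set i₀ : ℕ := Nat.find hhit with hi₀def
    have hb : (⇑e.symm)^[i₀] x ∈ F m := Nat.find_spec hhit
    have hmini₀ : ∀ j, j < i₀ → (⇑e.symm)^[j] x ∉ F m := fun j hj => Nat.find_min hhit hj
    set b : X := (⇑e.symm)^[i₀] x with hbdef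
    -- the return time of the base point
    have hret : ∃ l, 1 ≤ l ∧ (⇑e)^[l] b ∈ F m := by
      by_contra hc
      push_neg at hc
      refine (hnotbad i₀).2 (Or.inr ?_)
      refine mem_iUnion.2 ⟨m, Or.inr ?_⟩
      simp only [hbad3def, mem_inter_iff, mem_setOf_eq]
      exact ⟨hb, fun l hl => hc l hl⟩
    set r : ℕ := rtime (⇑e) (F m) b with hrdef
    have hrmem : 1 ≤ r ∧ (⇑e)^[r] b ∈ F m := by
      obtain ⟨l, hl1, hl2⟩ := hret
      have hne : {l | 1 ≤ l ∧ (⇑e)^[l] b ∈ F m}.Nonempty := ⟨l, hl1, hl2⟩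
      exact Nat.sInf_mem hne
    have hi₀r : i₀ < r := by
      by_contra hc
      push_neg at hc
      have h1 : (⇑e)^[r] b = (⇑e.symm)^[i₀ - r] x := by
        rw [hbdef, iter_apply_symm e r i₀ x, if_pos hc]
      have h2 : (⇑e.symm)^[i₀ - r] x ∈ F m := h1 ▸ hrmem.2
      exact hmini₀ (i₀ - r) (by omega) h2
    have hTib : (⇑e)^[i₀] b = x := by
      rw [hbdef, iter_apply_symm e i₀ i₀ x, if_pos (le_refl i₀)]
      simp
    -- the name list of the base point
    have hnl_len : (nlist (⇑e) D (F m) m b).length = r := by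
      simp [nlist, hrdef]
    have hnl_get : (nlist (⇑e) D (F m) m b)[i₀]? = some (pcode D m x) := by
      have hlt : i₀ < r := hi₀r
      simp only [nlist, List.getElem?_map, ← hrdef]
      rw [List.getElem?_range hlt]
      simp [hTib]
    have hpk : k ∈ pfin D m x ↔ x ∈ D k := by
      rw [mem_pfin]
      simp only [and_iff_right_iff_imp]
      intro; omega
    constructor
    · -- decoding is correct
      rintro hxDec
      obtain ⟨j, hj⟩ := mem_iUnion.1 hxDec
      obtain ⟨hj1, hj2⟩ := hj
      simp only [mem_preimage, hEntdef, mem_setOf_eq] at hj2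
      obtain ⟨s, hs, c, hcs, L, hL, w, hw, t, ht, hkt⟩ := hj2
      rw [hfval j, decode₂_encode, Option.mem_some_iff] at hs
      subst hs
      obtain ⟨m', hm', heq'⟩ := Finset.mem_image.1 hcs
      have hm'm : m' = m := congrArg Prod.fst heq'
      have hcval : c = cname (⇑e) D (F m) m ((⇑e.symm)^[j] x) := by
        have h2' : cname (⇑e) D (F m') m' ((⇑e.symm)^[j] x) = c := congrArg Prod.snd heq'
        rw [← h2', hm'm]
      have hjF : (⇑e.symm)^[j] x ∈ F m := by
        rw [← hm'm]; exact (hfin j).mem_toFinset.1 hm'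
      -- j must be the first hitting time
      have hji : j = i₀ := by
        have h1 : i₀ ≤ j := Nat.find_min' hhit hjF
        rcases Nat.lt_or_ge i₀ j with h | h
        · exfalso
          have := mem_iInter.1 (mem_iInter.1 hj1 i₀) h
          simp only [mem_compl_iff, mem_preimage] at this
          exact this ((hasE_iff i₀).2 hb)
        · omega
      subst hji
      -- now unravel the decoding chain
      rw [hcval] at hL
      have hLval : L = nlist (⇑e) D (F m) m b := by
        have hcn : cname (⇑e) D (F m) m ((⇑e.symm)^[i₀] x) =
            encode (nlist (⇑e) D (F m) m b) := by rw [← hbdef]; rfl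
        rw [hcn, decode₂_encode, Option.mem_some_iff] at hL
        exact hL.symm
      rw [hLval, hnl_get, Option.some_inj] at hw
      rw [← hw] at ht
      have htval : t = pfin D m x := by
        have hpc : pcode D m x = encode (pfin D m x) := rfl
        rw [hpc, decode₂_encode, Option.mem_some_iff] at ht
        exact ht.symm
      rw [htval] at hkt
      exact hpk.1 hkt
    · -- encoding: the witness j = i₀ works
      intro hxD
      refine mem_iUnion.2 ⟨i₀, ?_, ?_⟩
      · refine mem_iInter.2 fun i => mem_iInter.2 fun hi => ?_
        simp only [mem_compl_iff, mem_preimage]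
        intro hcon
        exact hmini₀ i hi ((hasE_iff i).1 hcon)
      · simp only [mem_preimage, hEntdef, mem_setOf_eq]
        rw [hfval i₀]
        refine ⟨_, by rw [decode₂_encode]; rfl,
          cname (⇑e) D (F m) m ((⇑e.symm)^[i₀] x), ?_, ?_⟩
        · exact Finset.mem_image_of_mem _ ((hfin i₀).mem_toFinset.2 hb)
        · refine ⟨nlist (⇑e) D (F m) m b, ?_, ?_⟩
          · have hcn : cname (⇑e) D (F m) m ((⇑e.symm)^[i₀] x) =
                encode (nlist (⇑e) D (F m) m b) := by rw [← hbdef]; rfl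
            rw [hcn, decode₂_encode]; rfl
          · refine ⟨pcode D m x, hnl_get, pfin D m x, ?_, hpk.2 hxD⟩
            have hpc : pcode D m x = encode (pfin D m x) := rfl
            rw [hpc, decode₂_encode]; rfl
  -- each generator is decodable mod 0
  have hDk : ∀ k : ℕ, μ (symmDiff (D k) (Dec k k)) = 0 := by
    intro k
    refine measure_mono_null ?_ hΩnull
    intro x hx
    rw [Set.mem_symmDiff] at hx
    intro hxΩ
    have := hmain x hxΩ k k (le_refl k)
    rcases hx with ⟨h1, h2⟩ | ⟨h1, h2⟩
    · exact h2 (this.2 h1)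
    · exact h2 (this.1 h1)
  have hgen : MeasurableSpace.generateFrom (MeasurableSpace.countableGeneratingSet X) ≤
      approxAlg μ (genAlg e f) := by
    refine MeasurableSpace.generateFrom_le ?_
    intro A hA
    rw [hD] at hA
    obtain ⟨k, rfl⟩ := hA
    exact ⟨Dec k k, hDec𝔪 k k, hDk k⟩
  have hle : ‹MeasurableSpace X› ≤ approxAlg μ (genAlg e f) :=
    le_of_eq_of_le (MeasurableSpace.generateFrom_countableGeneratingSet (α := X)).symm hgen
  exact ⟨f, hfmeas, fun A hA => MeasurableSpace.le_def.mp hle A hA⟩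
end
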